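/- Let s ≥ 1 and m ≥ 1 with m ≡ ℓ (mod s), 0 < ℓ ≤ s. Write [t^m]_s = Σ_i a_i τ^i ∈ Mat_s(A[τ]) with top degree n = ⌈m/s⌉. Then the leading coefficient matrix a_n = (c_{ij}) satisfies c_{ij} = 1 if i = j + s − ℓ and c_{ij} = 0 if i < j + s − ℓ (i.e. it is lower-triangular in the shifted sense with 1's on the (s−ℓ)-shifted diagonal and zeros above). -/

import Mathlib

open Polynomial

/-- Multiplication in the twisted matrix polynomial ring `Mat_s(A[τ])`
(`A = F_q[θ]`), modelled as `ℕ →₀ Mat_s(A)` with `τ M = M^{(1)} τ`, where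
`M^{(1)}` is the entrywise `q`-power Frobenius twist. -/
noncomputable def tmulM (q s : ℕ) {Fq : Type*} [Field Fq]
    (f g : ℕ →₀ Matrix (Fin s) (Fin s) (Polynomial Fq)) :
    ℕ →₀ Matrix (Fin s) (Fin s) (Polynomial Fq) :=
  f.sum fun i a => g.sum fun j b =>
    Finsupp.single (i + j) (a * b.map fun x => x ^ q ^ i)

/-- `m`-fold composition power in the twisted matrix polynomial ring. -/
noncomputable def tpowM (q s : ℕ) {Fq : Type*} [Field Fq]
    (f : ℕ →₀ Matrix (Fin s) (Fin s) (Polynomial Fq)) :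
    ℕ → ℕ →₀ Matrix (Fin s) (Fin s) (Polynomial Fq)
  | 0 => Finsupp.single 0 1
  | n + 1 => tmulM q s f (tpowM q s f n)

/-- The defining element `[t]_s = (θ I_s + N_s) + E_s τ` of the `s`-th tensor power
`C^{⊗s}` of the Carlitz module: `N_s` has `1`s on the superdiagonal and `E_s` has a
single `1` in the lower-left corner. -/
noncomputable def carlitzT (s : ℕ) (Fq : Type*) [Field Fq] :
    ℕ →₀ Matrix (Fin s) (Fin s) (Polynomial Fq) :=
  Finsupp.single 0 ((X : Polynomial Fq) • (1 : Matrix (Fin s) (Fin s) (Polynomial Fq)) +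
      Matrix.of fun i j : Fin s => if (i : ℕ) + 1 = (j : ℕ) then 1 else 0) +
  Finsupp.single 1
    (Matrix.of fun i j : Fin s => if (i : ℕ) = s - 1 ∧ (j : ℕ) = 0 then 1 else 0)


noncomputable def Amat (s : ℕ) (Fq : Type*) [Field Fq] : Matrix (Fin s) (Fin s) (Polynomial Fq) :=
  (X : Polynomial Fq) • (1 : Matrix (Fin s) (Fin s) (Polynomial Fq)) +
    Matrix.of fun i j : Fin s => if (i : ℕ) + 1 = (j : ℕ) then 1 else 0

noncomputable def Emat (s : ℕ) (Fq : Type*) [Field Fq] : Matrix (Fin s) (Fin s) (Polynomial Fq) :=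
  Matrix.of fun i j : Fin s => if (i : ℕ) = s - 1 ∧ (j : ℕ) = 0 then 1 else 0

lemma carlitzT_eq (s : ℕ) (Fq : Type*) [Field Fq] :
    carlitzT s Fq = Finsupp.single 0 (Amat s Fq) + Finsupp.single 1 (Emat s Fq) := rfl

lemma sum_single_shift {β M : Type*} [Zero β] [AddCommMonoid M] (g : ℕ →₀ β)
    (F : ℕ → β → M) (hF : ∀ j, F j 0 = 0) (c k : ℕ) :
    (g.sum fun j b => Finsupp.single (c + j) (F j b)) k
      = if c ≤ k then F (k - c) (g (k - c)) else 0 := by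
  rw [Finsupp.sum_apply]
  simp only [Finsupp.single_apply]
  by_cases h : c ≤ k
  · rw [if_pos h, Finsupp.sum]
    by_cases hm : k - c ∈ g.support
    · rw [Finset.sum_eq_single (k - c)]
      · rw [if_pos (by omega)]
      · intro l _ hne
        rw [if_neg (by omega)]
      · intro habs; exact absurd hm habs
    · have h0 : g (k - c) = 0 := Finsupp.notMem_support_iff.mp hm
      rw [h0, hF]
      apply Finset.sum_eq_zero
      intro l hl
      by_cases he : c + l = k
      · have hlk : l = k - c := by omega
        exact absurd (hlk ▸ hl) hm
      · rw [if_neg he]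
  · rw [if_neg h, Finsupp.sum]
    apply Finset.sum_eq_zero
    intro l _
    rw [if_neg (by omega)]

lemma tmul_carlitz_coeff (q s : ℕ) (hq : 1 ≤ q) (Fq : Type*) [Field Fq]
    (g : ℕ →₀ Matrix (Fin s) (Fin s) (Polynomial Fq)) (k : ℕ) :
    tmulM q s (carlitzT s Fq) g k
      = Amat s Fq * g k +
        (if 1 ≤ k then Emat s Fq * ((g (k - 1)).map (· ^ q)) else 0) := by
  have hz0 : ∀ b : Matrix (Fin s) (Fin s) (Polynomial Fq),
      b.map (fun x : Polynomial Fq => x ^ q ^ 0) = b := by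
    intro b; ext i j; simp [Matrix.map_apply]
  have hz1 : ∀ b : Matrix (Fin s) (Fin s) (Polynomial Fq),
      b.map (fun x : Polynomial Fq => x ^ q ^ 1) = b.map (· ^ q) := by
    intro b; ext i j; simp [Matrix.map_apply]
  have hmapzero : (0 : Matrix (Fin s) (Fin s) (Polynomial Fq)).map
      (fun x : Polynomial Fq => x ^ q ^ 1) = 0 := by
    ext i j; simp [Matrix.map_apply, zero_pow (show q ≠ 0 by omega)]
  unfold tmulM
  rw [carlitzT_eq, Finsupp.sum_add_index']
  · rw [Finsupp.sum_single_index, Finsupp.sum_single_index]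
    · have e1 := sum_single_shift g
        (fun _ b => Amat s Fq * b.map (fun x : Polynomial Fq => x ^ q ^ 0))
        (fun _ => by beta_reduce; rw [hz0]; exact mul_zero _) 0 k
      have e2 := sum_single_shift g
        (fun _ b => Emat s Fq * b.map (fun x : Polynomial Fq => x ^ q ^ 1))
        (fun _ => by beta_reduce; rw [hmapzero]; exact mul_zero _) 1 k
      rw [Finsupp.add_apply, e1, e2]
      simp only [Nat.zero_le, if_pos, Nat.sub_zero, hz0, hz1]
    · simp only [zero_mul, Finsupp.single_zero, Finsupp.sum, Finset.sum_const_zero]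
    · simp only [zero_mul, Finsupp.single_zero, Finsupp.sum, Finset.sum_const_zero]
  · intro a; simp only [zero_mul, Finsupp.single_zero, Finsupp.sum, Finset.sum_const_zero]
  · intro a b₁ b₂; simp only [add_mul, Finsupp.single_add, Finsupp.sum_add]

lemma Amat_mul_apply (s : ℕ) (Fq : Type*) [Field Fq]
    (M : Matrix (Fin s) (Fin s) (Polynomial Fq)) (i j : Fin s) :
    (Amat s Fq * M) i j
      = X * M i j + (if h : (i : ℕ) + 1 < s then M ⟨(i : ℕ) + 1, h⟩ j else 0) := by
  unfold Amat
  rw [Matrix.add_mul, Matrix.add_apply, Matrix.smul_mul, Matrix.one_mul,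
    Matrix.smul_apply, smul_eq_mul]
  congr 1
  rw [Matrix.mul_apply]
  by_cases h : (i : ℕ) + 1 < s
  · rw [dif_pos h, Finset.sum_eq_single (⟨(i : ℕ) + 1, h⟩ : Fin s)]
    · simp
    · intro l _ hne
      have : (i : ℕ) + 1 ≠ (l : ℕ) := fun hc => hne (Fin.ext hc.symm)
      simp [Matrix.of_apply, this]
    · simp
  · rw [dif_neg h]
    apply Finset.sum_eq_zero
    intro l _
    have hl := l.isLt
    have : (i : ℕ) + 1 ≠ (l : ℕ) := by omega
    simp [Matrix.of_apply, this]

lemma Emat_mul_apply (s : ℕ) (Fq : Type*) [Field Fq]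
    (M : Matrix (Fin s) (Fin s) (Polynomial Fq)) (i j : Fin s) :
    (Emat s Fq * M) i j
      = if (i : ℕ) = s - 1 then M ⟨0, i.pos⟩ j else 0 := by
  unfold Emat
  rw [Matrix.mul_apply]
  by_cases h : (i : ℕ) = s - 1
  · rw [if_pos h, Finset.sum_eq_single (⟨0, i.pos⟩ : Fin s)]
    · simp [Matrix.of_apply, h]
    · intro l _ hne
      have : ¬((l : ℕ) = 0) := fun hc => hne (Fin.ext hc)
      simp [Matrix.of_apply, this]
    · simp
  · rw [if_neg h]
    apply Finset.sum_eq_zero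
    intro l _
    simp [Matrix.of_apply, h]

lemma key (q s : ℕ) (hq : 1 ≤ q) (Fq : Type*) [Field Fq] :
    ∀ (m k K : ℕ), k * s = K → ∀ i j : Fin s,
      ((i : ℕ) + m < (j : ℕ) + K → tpowM q s (carlitzT s Fq) m k i j = 0) ∧
      ((i : ℕ) + m = (j : ℕ) + K → tpowM q s (carlitzT s Fq) m k i j = 1) := by
  intro m
  induction m with
  | zero =>
    intro k K hK i j
    have his := i.isLt; have hjs := j.isLt
    constructor
    · intro h
      rcases Nat.eq_zero_or_pos k with hk | hk
      · subst hk
        have hK0 : K = 0 := by simpa using hK.symm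
        subst hK0
        have hne : i ≠ j := fun hc => by omega
        simp [tpowM, Matrix.one_apply_ne hne]
      · have hkk : k ≠ 0 := by omega
        simp [tpowM, Finsupp.single_apply, (show ¬ (0 = k) from fun hc => hkk hc.symm)]
    · intro h
      have hk : k = 0 := by
        by_contra hk
        have hsK : s ≤ K := hK ▸ Nat.le_mul_of_pos_left s (by omega)
        omega
      subst hk
      have hK0 : K = 0 := by simpa using hK.symm
      subst hK0
      have hij : i = j := Fin.ext (by omega)
      subst hij
      simp [tpowM, Matrix.one_apply_eq]
  | succ m IH =>
    intro k K hK i j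
    have his := i.isLt; have hjs := j.isLt
    have hcoef : tpowM q s (carlitzT s Fq) (m + 1) k
        = Amat s Fq * (tpowM q s (carlitzT s Fq) m) k +
          (if 1 ≤ k then Emat s Fq *
            (((tpowM q s (carlitzT s Fq) m) (k - 1)).map (· ^ q)) else 0) := by
      show tmulM q s (carlitzT s Fq) (tpowM q s (carlitzT s Fq) m) k = _
      exact tmul_carlitz_coeff q s hq Fq _ k
    set P := tpowM q s (carlitzT s Fq) m with hP
    by_cases hk : 1 ≤ k
    · rw [hcoef, if_pos hk]
      have hsK : s ≤ K := hK ▸ Nat.le_mul_of_pos_left s (by omega)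
      have hK' : (k - 1) * s = K - s := by
        rw [Nat.sub_mul, one_mul, hK]
      obtain ⟨IH0, IH1⟩ := IH k K hK i j
      constructor
      · intro h
        rw [Matrix.add_apply, Amat_mul_apply, Emat_mul_apply, IH0 (by omega)]
        have hN : (if h' : (i : ℕ) + 1 < s then P k ⟨(i : ℕ) + 1, h'⟩ j else 0) = 0 := by
          split_ifs with h'
          · exact (IH k K hK ⟨(i : ℕ) + 1, h'⟩ j).1 (by simp only [Fin.val_mk]; omega)
          · rfl
        have hE : (if (i : ℕ) = s - 1 then ((P (k - 1)).map (· ^ q)) ⟨0, i.pos⟩ j else 0)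
            = 0 := by
          split_ifs with h'
          · rw [Matrix.map_apply,
              (IH (k - 1) (K - s) hK' ⟨0, i.pos⟩ j).1 (by simp only [Fin.val_mk]; omega)]
            exact zero_pow (by omega)
          · rfl
        rw [hN, hE, mul_zero, add_zero, add_zero]
      · intro h
        rw [Matrix.add_apply, Amat_mul_apply, Emat_mul_apply, IH0 (by omega), mul_zero,
          zero_add]
        by_cases h' : (i : ℕ) + 1 < s
        · rw [dif_pos h']
          rw [(IH k K hK ⟨(i : ℕ) + 1, h'⟩ j).2 (by simp only [Fin.val_mk]; omega)]
          rw [if_neg (by omega), add_zero]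
        · have hi : (i : ℕ) = s - 1 := by omega
          rw [dif_neg h', if_pos hi, zero_add, Matrix.map_apply,
            (IH (k - 1) (K - s) hK' ⟨0, i.pos⟩ j).2 (by simp only [Fin.val_mk]; omega)]
          exact one_pow q
    · have hk0 : k = 0 := by omega
      have hK0 : K = 0 := by subst hk0; simpa using hK.symm
      rw [hcoef, if_neg hk]
      obtain ⟨IH0, IH1⟩ := IH k K hK i j
      constructor
      · intro h
        rw [Matrix.add_apply, Amat_mul_apply, IH0 (by omega), mul_zero, zero_add,
          Matrix.zero_apply, add_zero]
        split_ifs with h'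
        · exact (IH k K hK ⟨(i : ℕ) + 1, h'⟩ j).1 (by simp only [Fin.val_mk]; omega)
        · rfl
      · intro h
        have h' : (i : ℕ) + 1 < s := by omega
        rw [Matrix.add_apply, Amat_mul_apply, IH0 (by omega), mul_zero, zero_add,
          Matrix.zero_apply, add_zero, dif_pos h']
        exact (IH k K hK ⟨(i : ℕ) + 1, h'⟩ j).2 (by simp only [Fin.val_mk]; omega)

/-- Papanikolas's leading-coefficient computation. For `m ≡ ℓ (mod s)`
with `0 < ℓ ≤ s`, the leading coefficient matrix `a_n` of `[t^m]_s` (where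
`n = ⌈m/s⌉ = (m+s-1)/s`) has `(i,j)`-entry `1` if `i = j + s − ℓ` and `0` if
`i < j + s − ℓ`. -/
theorem stmt_10 (q s : ℕ) (hs : 1 ≤ s)
    (Fq : Type*) [Field Fq] [Fintype Fq] (hq : Fintype.card Fq = q)
    (m ℓ : ℕ) (hm : 1 ≤ m) (hℓ0 : 0 < ℓ) (hℓs : ℓ ≤ s) (hmod : m % s = ℓ % s) :
    ∀ i j : Fin s,
      ((i : ℕ) = (j : ℕ) + s - ℓ →
        (tpowM q s (carlitzT s Fq) m) ((m + s - 1) / s) i j = 1) ∧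
      ((i : ℕ) < (j : ℕ) + s - ℓ →
        (tpowM q s (carlitzT s Fq) m) ((m + s - 1) / s) i j = 0) := by
  have hq1 : 1 ≤ q := hq ▸ Fintype.card_pos
  obtain ⟨a, ha⟩ : ∃ a, m = a * s + ℓ := by
    rcases eq_or_lt_of_le hℓs with rfl | hlt
    · have h0 : m % ℓ = 0 := by rw [hmod, Nat.mod_self]
      obtain ⟨b, hb⟩ := Nat.dvd_of_mod_eq_zero h0
      rcases b with _ | b'
      · simp at hb; omega
      · exact ⟨b', by rw [hb]; ring⟩
    · have h1 : ℓ % s = ℓ := Nat.mod_eq_of_lt hlt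
      refine ⟨m / s, ?_⟩
      have h2 := Nat.div_add_mod m s
      rw [hmod, h1] at h2
      have h3 : s * (m / s) = (m / s) * s := by ring
      omega
  have hN : (m + s - 1) / s = a + 1 := by
    have h2 : s * (a + 1) = a * s + s := by ring
    have e : m + s - 1 = (ℓ - 1) + s * (a + 1) := by omega
    rw [e, Nat.add_mul_div_left _ _ (show 0 < s by omega),
      Nat.div_eq_of_lt (show ℓ - 1 < s by omega), zero_add]
  have hNs : ((m + s - 1) / s) * s = m + s - ℓ := by
    rw [hN]
    have h2 : (a + 1) * s = a * s + s := by ring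
    omega
  intro i j
  have hjs := j.isLt
  obtain ⟨h0, h1⟩ := key q s hq1 Fq m ((m + s - 1) / s) (m + s - ℓ) hNs i j
  constructor
  · intro hij
    rw [hNs] at *
    exact h1 (by omega)
  · intro hij
    exact h0 (by omega)
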